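/- (Lemma 4.4, measure version.) Let (Ω, 𝓕, P) be a probability space, let γ = (γ₁, γ₂) : [0,1] → ℝ² be absolutely continuous with integrable derivative, and let U = (U₁, U₂, U₃) : Ω × [0,1] → ℝ³ be jointly measurable with continuous sample paths t ↦ U(ω, t). Define Z(ω, t) := (U₁(ω,t), U₂(ω,t), U₃(ω,t) + ∫₀ᵗ ω((U₁(ω,s), U₂(ω,s)), γ′(s)) ds), and for g = (x,y,z) ∈ ℝ³ set ρ(g, e) := (x² + y² + |z|)^{1/2}. Then lim_{ε→0⁺} P( sup_{t∈[0,1]} ρ(U(·,t), e) < ε ) = lim_{ε→0⁺} P( sup_{t∈[0,1]} ρ(Z(·,t), e) < ε ), both limits existing since the events are decreasing in ε. -/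

import Mathlib

open MeasureTheory Set Filter Topology
open scoped ENNReal

noncomputable section

/-- The standard symplectic form on `ℝ²`. -/
def omegaForm (v w : ℝ × ℝ) : ℝ := v.1 * w.2 - w.1 * v.2

/-- The homogeneous distance to the identity: `ρ(g, e) = (x² + y² + |z|)^{1/2}`
for `g = (x, y, z)`. -/
def rho0 (g : (ℝ × ℝ) × ℝ) : ℝ := Real.sqrt (g.1.1 ^ 2 + g.1.2 ^ 2 + |g.2|)

lemma continuous_rho0 : Continuous rho0 := by
  unfold rho0
  fun_prop

lemma rho0_eq_zero_iff (g : (ℝ × ℝ) × ℝ) : rho0 g = 0 ↔ g = ((0, 0), 0) := by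
  unfold rho0
  rw [Real.sqrt_eq_zero']
  constructor
  · rintro h
    have h1 : (0:ℝ) ≤ g.1.1 ^ 2 := sq_nonneg _
    have h2 : (0:ℝ) ≤ g.1.2 ^ 2 := sq_nonneg _
    have h3 : (0:ℝ) ≤ |g.2| := abs_nonneg _
    have e1 : g.1.1 = 0 := by nlinarith [sq_abs g.1.1, abs_nonneg g.1.1]
    have e2 : g.1.2 = 0 := by nlinarith
    have e3 : g.2 = 0 := by
      have : |g.2| = 0 := by nlinarith
      exact abs_eq_zero.1 this
    exact Prod.ext (Prod.ext e1 e2) e3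
  · rintro rfl; simp

lemma iSup_Icc_eq_max {g : ℝ → ℝ} {t₀ : ℝ} (ht₀ : t₀ ∈ Icc (0:ℝ) 1)
    (hmax : ∀ t ∈ Icc (0:ℝ) 1, g t ≤ g t₀) :
    (⨆ t : Icc (0:ℝ) 1, g t) = g t₀ := by
  haveI : Nonempty (Icc (0:ℝ) 1) := ⟨⟨0, by norm_num⟩⟩
  refine le_antisymm (ciSup_le fun t : Icc (0:ℝ) 1 => hmax t.1 t.2) ?_
  exact le_ciSup ⟨g t₀, forall_mem_range.2 fun t : Icc (0:ℝ) 1 => hmax t.1 t.2⟩ (⟨t₀, ht₀⟩ : Icc (0:ℝ) 1)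

lemma iSup_dense_eq_max {g : ℝ → ℝ} (hg : ContinuousOn g (Icc 0 1)) {t₀ : ℝ}
    (ht₀ : t₀ ∈ Icc (0:ℝ) 1) (hmax : ∀ t ∈ Icc (0:ℝ) 1, g t ≤ g t₀)
    {D : Set (Icc (0:ℝ) 1)} (hD : Dense D) (hne : D.Nonempty) :
    (⨆ q : D, g q.1) = g t₀ := by
  haveI : Nonempty D := hne.to_subtype
  have hbdd : BddAbove (range fun q : D => g q.1) :=
    ⟨g t₀, forall_mem_range.2 fun q => hmax q.1 q.1.2⟩
  refine le_antisymm (ciSup_le fun q => hmax q.1 q.1.2) ?_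
  have hcont : Continuous fun t : Icc (0:ℝ) 1 => g t := hg.restrict
  have hC : IsClosed {x : Icc (0:ℝ) 1 | g x ≤ ⨆ q : D, g q.1} :=
    isClosed_le hcont continuous_const
  have hDC : D ⊆ {x : Icc (0:ℝ) 1 | g x ≤ ⨆ q : D, g q.1} := fun q hq =>
    le_ciSup hbdd (⟨q, hq⟩ : D)
  have h1 : closure D ⊆ {x : Icc (0:ℝ) 1 | g x ≤ ⨆ q : D, g q.1} :=
    hC.closure_subset_iff.2 hDC
  exact h1 (hD ⟨t₀, ht₀⟩)

lemma aemeasurable_sup_proc {Ω : Type*} [MeasurableSpace Ω] (P : Measure Ω) {f : Ω → ℝ → ℝ}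
    (hm : ∀ t ∈ Icc (0:ℝ) 1, AEMeasurable (fun ω => f ω t) P)
    (hc : ∀ ω, ContinuousOn (f ω) (Icc 0 1)) :
    AEMeasurable (fun ω => ⨆ t : Icc (0:ℝ) 1, f ω t) P := by
  haveI : Nonempty (Icc (0:ℝ) 1) := ⟨⟨0, by norm_num⟩⟩
  obtain ⟨D, hDc, hDd⟩ := TopologicalSpace.exists_countable_dense (Icc (0:ℝ) 1)
  haveI := hDc.to_subtype
  have hne : D.Nonempty := hDd.nonempty
  have key : (fun ω => ⨆ t : Icc (0:ℝ) 1, f ω t) = fun ω => ⨆ q : D, f ω q.1 := by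
    funext ω
    obtain ⟨t₀, ht₀, hmax⟩ :=
      isCompact_Icc.exists_isMaxOn (nonempty_Icc.2 zero_le_one) (hc ω)
    rw [iSup_Icc_eq_max ht₀ hmax, iSup_dense_eq_max (hc ω) ht₀ hmax hDd hne]
  rw [key]
  exact AEMeasurable.iSup fun q => hm q.1 q.1.2

/-- (Lemma 4.4, measure version.) Let `(Ω, 𝓕, P)` be a probability space, `γ : [0,1] → ℝ²`
absolutely continuous with integrable derivative `γ′`, and `U : Ω × [0,1] → ℝ³` jointly
measurable with continuous sample paths. Define
`Z(ω, t) := (U₁(ω,t), U₂(ω,t), U₃(ω,t) + ∫₀ᵗ ω((U₁(ω,s), U₂(ω,s)), γ′(s)) ds)`. Then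
`lim_{ε→0⁺} P(sup_{t∈[0,1]} ρ(U(·,t), e) < ε) = lim_{ε→0⁺} P(sup_{t∈[0,1]} ρ(Z(·,t), e) < ε)`,
both limits existing. -/
theorem heisenberg_tube_probability_limits
    {Ω : Type*} [MeasurableSpace Ω] (P : Measure Ω) [IsProbabilityMeasure P]
    (γ γ' : ℝ → ℝ × ℝ) (hγ' : IntegrableOn γ' (Icc (0:ℝ) 1))
    (hγ : ∀ t ∈ Icc (0:ℝ) 1, γ t = γ 0 + ∫ s in (0:ℝ)..t, γ' s)
    (U : Ω → ℝ → (ℝ × ℝ) × ℝ)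
    (hU : Measurable (fun p : Ω × ℝ => U p.1 p.2))
    (hUc : ∀ ω : Ω, ContinuousOn (U ω) (Icc (0:ℝ) 1))
    (Z : Ω → ℝ → (ℝ × ℝ) × ℝ)
    (hZ : ∀ (ω : Ω) (t : ℝ), Z ω t =
      ((U ω t).1, (U ω t).2 + ∫ s in (0:ℝ)..t, omegaForm (U ω s).1 (γ' s))) :
    ∃ L : ℝ≥0∞,
      Tendsto (fun ε : ℝ => P {ω | (⨆ t : Icc (0:ℝ) 1, rho0 (U ω t)) < ε})
        (𝓝[>] (0:ℝ)) (𝓝 L) ∧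
      Tendsto (fun ε : ℝ => P {ω | (⨆ t : Icc (0:ℝ) 1, rho0 (Z ω t)) < ε})
        (𝓝[>] (0:ℝ)) (𝓝 L) := by
  haveI : Nonempty (Icc (0:ℝ) 1) := ⟨⟨0, by norm_num⟩⟩
  -- integrability of the correction integrand along each sample path
  have hφint : ∀ ω, IntegrableOn (fun s => omegaForm (U ω s).1 (γ' s)) (Icc (0:ℝ) 1) := by
    intro ω
    have hU1 : ContinuousOn (fun s => (U ω s).1.1) (Icc (0:ℝ) 1) :=
      (continuous_fst.comp continuous_fst).comp_continuousOn (hUc ω)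
    have hU2 : ContinuousOn (fun s => (U ω s).1.2) (Icc (0:ℝ) 1) :=
      (continuous_snd.comp continuous_fst).comp_continuousOn (hUc ω)
    obtain ⟨C1, hC1⟩ := isCompact_Icc.exists_bound_of_continuousOn hU1
    obtain ⟨C2, hC2⟩ := isCompact_Icc.exists_bound_of_continuousOn hU2
    have hm1 : AEStronglyMeasurable (fun s => (U ω s).1.1)
        (volume.restrict (Icc (0:ℝ) 1)) := hU1.aestronglyMeasurable measurableSet_Icc
    have hm2 : AEStronglyMeasurable (fun s => (U ω s).1.2)
        (volume.restrict (Icc (0:ℝ) 1)) := hU2.aestronglyMeasurable measurableSet_Icc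
    have hb1 : ∀ᵐ s ∂(volume.restrict (Icc (0:ℝ) 1)), ‖(U ω s).1.1‖ ≤ C1 :=
      (ae_restrict_iff' measurableSet_Icc).2 (Eventually.of_forall fun s hs => hC1 s hs)
    have hb2 : ∀ᵐ s ∂(volume.restrict (Icc (0:ℝ) 1)), ‖(U ω s).1.2‖ ≤ C2 :=
      (ae_restrict_iff' measurableSet_Icc).2 (Eventually.of_forall fun s hs => hC2 s hs)
    have h1 : Integrable (fun s => (U ω s).1.1 * (γ' s).2)
        (volume.restrict (Icc (0:ℝ) 1)) := Integrable.bdd_mul hγ'.snd hm1 hb1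
    have h2 : Integrable (fun s => (U ω s).1.2 * (γ' s).1)
        (volume.restrict (Icc (0:ℝ) 1)) := Integrable.bdd_mul hγ'.fst hm2 hb2
    have := h1.sub h2
    refine this.congr (Eventually.of_forall fun s => ?_)
    simp only [omegaForm, Pi.sub_apply]; ring
  -- continuity of Z sample paths
  have hZc : ∀ ω, ContinuousOn (Z ω) (Icc (0:ℝ) 1) := by
    intro ω
    have hI : ContinuousOn (fun t => ∫ s in (0:ℝ)..t, omegaForm (U ω s).1 (γ' s))
        (Icc (0:ℝ) 1) := by
      have h := intervalIntegral.continuousOn_primitive_interval (a := (0:ℝ)) (b := 1) (μ := volume)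
        (f := fun s => omegaForm (U ω s).1 (γ' s))
        (by simpa [uIcc_of_le zero_le_one] using hφint ω)
      simpa [uIcc_of_le zero_le_one] using h
    have h := ((continuous_fst.comp_continuousOn (hUc ω)).prodMk
      ((continuous_snd.comp_continuousOn (hUc ω)).add hI))
    exact h.congr fun t _ => hZ ω t
  -- measurability in ω at fixed times
  have hUm : ∀ t ∈ Icc (0:ℝ) 1, AEMeasurable (fun ω => U ω t) P := fun t _ =>
    (hU.comp (measurable_id.prodMk measurable_const)).aemeasurable
  have hZm : ∀ t ∈ Icc (0:ℝ) 1, AEMeasurable (fun ω => Z ω t) P := by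
    intro t ht
    have hUt : Measurable fun ω => U ω t := hU.comp (measurable_id.prodMk measurable_const)
    have hJ : AEMeasurable (fun ω => ∫ s in (0:ℝ)..t, omegaForm (U ω s).1 (γ' s)) P := by
      have hrw : (fun ω => ∫ s in (0:ℝ)..t, omegaForm (U ω s).1 (γ' s))
          = fun ω => ∫ s in Ioc (0:ℝ) t, omegaForm (U ω s).1 (γ' s) :=
        funext fun ω => intervalIntegral.integral_of_le ht.1
      rw [hrw]
      set ν := volume.restrict (Ioc (0:ℝ) t) with hν
      have hsub : Ioc (0:ℝ) t ⊆ Icc (0:ℝ) 1 :=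
        Ioc_subset_Icc_self.trans (Icc_subset_Icc le_rfl ht.2)
      have hγm : AEStronglyMeasurable γ' ν := AEStronglyMeasurable.mono_set hsub hγ'.aestronglyMeasurable
      have hprod : AEStronglyMeasurable
          (fun p : Ω × ℝ => omegaForm (U p.1 p.2).1 (γ' p.2)) (P.prod ν) := by
        have h1 : AEStronglyMeasurable (fun p : Ω × ℝ => (U p.1 p.2).1.1) (P.prod ν) :=
          ((continuous_fst.comp continuous_fst).measurable.comp hU).aestronglyMeasurable
        have h2 : AEStronglyMeasurable (fun p : Ω × ℝ => (U p.1 p.2).1.2) (P.prod ν) :=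
          ((continuous_snd.comp continuous_fst).measurable.comp hU).aestronglyMeasurable
        have h3 : AEStronglyMeasurable (fun p : Ω × ℝ => (γ' p.2).2) (P.prod ν) :=
          (continuous_snd.comp_aestronglyMeasurable hγm).comp_snd
        have h4 : AEStronglyMeasurable (fun p : Ω × ℝ => (γ' p.2).1) (P.prod ν) :=
          (continuous_fst.comp_aestronglyMeasurable hγm).comp_snd
        exact (h1.mul h3).sub (h4.mul h2)
      exact hprod.integral_prod_right'.aemeasurable
    have hrw : (fun ω => Z ω t)
        = fun ω => ((U ω t).1, (U ω t).2 + ∫ s in (0:ℝ)..t, omegaForm (U ω s).1 (γ' s)) :=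
      funext fun ω => hZ ω t
    rw [hrw]
    exact (hUt.fst.aemeasurable).prodMk ((hUt.snd.aemeasurable).add hJ)
  -- the general limit statement for a process with continuous paths
  have main : ∀ (V : Ω → ℝ → (ℝ × ℝ) × ℝ),
      (∀ ω, ContinuousOn (V ω) (Icc (0:ℝ) 1)) →
      (∀ t ∈ Icc (0:ℝ) 1, AEMeasurable (fun ω => V ω t) P) →
      Tendsto (fun ε : ℝ => P {ω | (⨆ t : Icc (0:ℝ) 1, rho0 (V ω t)) < ε}) (𝓝[>] (0:ℝ))
        (𝓝 (P (⋂ ε > (0:ℝ), {ω | (⨆ t : Icc (0:ℝ) 1, rho0 (V ω t)) < ε}))) := by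
    intro V hVc hVm
    have hg : AEMeasurable (fun ω => ⨆ t : Icc (0:ℝ) 1, rho0 (V ω t)) P :=
      aemeasurable_sup_proc P
        (fun t ht => continuous_rho0.measurable.comp_aemeasurable (hVm t ht))
        (fun ω => continuous_rho0.comp_continuousOn (hVc ω))
    exact tendsto_measure_biInter_gt
      (fun r _ => hg.nullMeasurable measurableSet_Iio)
      (fun i j _ hij ω hω => lt_of_lt_of_le hω hij)
      ⟨1, one_pos, measure_ne_top P _⟩
  -- characterization of the limit event
  have hchar : ∀ (V : Ω → ℝ → (ℝ × ℝ) × ℝ), (∀ ω, ContinuousOn (V ω) (Icc (0:ℝ) 1)) →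
      (⋂ ε > (0:ℝ), {ω | (⨆ t : Icc (0:ℝ) 1, rho0 (V ω t)) < ε})
        = {ω | ∀ t ∈ Icc (0:ℝ) 1, V ω t = ((0, 0), 0)} := by
    intro V hVc
    ext ω
    simp only [mem_iInter, mem_setOf_eq]
    constructor
    · intro h t ht
      have hle : (⨆ t : Icc (0:ℝ) 1, rho0 (V ω t)) ≤ 0 := by
        by_contra hpos
        push_neg at hpos
        exact absurd (h _ hpos) (lt_irrefl _)
      obtain ⟨t₀, ht₀, hmax⟩ := isCompact_Icc.exists_isMaxOn (nonempty_Icc.2 zero_le_one)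
        (continuous_rho0.comp_continuousOn (hVc ω))
      have hbdd : BddAbove (range fun t : Icc (0:ℝ) 1 => rho0 (V ω t)) :=
        ⟨rho0 (V ω t₀), forall_mem_range.2 fun s : Icc (0:ℝ) 1 => hmax s.2⟩
      have hle' := le_trans (le_ciSup hbdd (⟨t, ht⟩ : Icc (0:ℝ) 1)) hle
      exact (rho0_eq_zero_iff _).1 (le_antisymm hle' (Real.sqrt_nonneg _))
    · intro h ε hε
      have h0 : ∀ t : Icc (0:ℝ) 1, rho0 (V ω t) = 0 := fun t =>
        (rho0_eq_zero_iff _).2 (h t t.2)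
      have hs : (⨆ t : Icc (0:ℝ) 1, rho0 (V ω t)) = 0 := by
        simp only [h0]; exact ciSup_const
      simpa [hs] using hε
  -- the two limit events coincide
  have hiff : ∀ ω, (∀ t ∈ Icc (0:ℝ) 1, U ω t = ((0, 0), 0))
      ↔ (∀ t ∈ Icc (0:ℝ) 1, Z ω t = ((0, 0), 0)) := by
    intro ω
    constructor
    · intro h t ht
      rw [hZ ω t]
      have hint : ∫ s in (0:ℝ)..t, omegaForm (U ω s).1 (γ' s) = 0 := by
        rw [intervalIntegral.integral_congr (g := fun _ => (0:ℝ)) ?_,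
          intervalIntegral.integral_zero]
        intro s hs
        rw [uIcc_of_le ht.1] at hs
        have hU0 : U ω s = ((0, 0), 0) := h s ⟨hs.1, hs.2.trans ht.2⟩
        simp [omegaForm, hU0]
      rw [hint]
      have hU0 := h t ht
      rw [hU0]
      simp
    · intro h t ht
      have h1 : ∀ s ∈ Icc (0:ℝ) 1, (U ω s).1 = (0, 0) := by
        intro s hs
        have hz := h s hs
        rw [hZ ω s] at hz
        exact congrArg Prod.fst hz
      have hint : ∫ s in (0:ℝ)..t, omegaForm (U ω s).1 (γ' s) = 0 := by
        rw [intervalIntegral.integral_congr (g := fun _ => (0:ℝ)) ?_,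
          intervalIntegral.integral_zero]
        intro s hs
        rw [uIcc_of_le ht.1] at hs
        simp [omegaForm, h1 s ⟨hs.1, hs.2.trans ht.2⟩]
      have h2 := h t ht
      rw [hZ ω t, hint] at h2
      have h3 := Prod.ext_iff.1 h2
      exact Prod.ext h3.1 (by simpa using h3.2)
  have hsets : (⋂ ε > (0:ℝ), {ω | (⨆ t : Icc (0:ℝ) 1, rho0 (U ω t)) < ε})
      = (⋂ ε > (0:ℝ), {ω | (⨆ t : Icc (0:ℝ) 1, rho0 (Z ω t)) < ε}) := by
    rw [hchar U hUc, hchar Z hZc]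
    ext ω
    exact hiff ω
  refine ⟨P (⋂ ε > (0:ℝ), {ω | (⨆ t : Icc (0:ℝ) 1, rho0 (U ω t)) < ε}),
    main U hUc hUm, ?_⟩
  rw [hsets]
  exact main Z hZc hZm
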